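/- Let K be a differential field of characteristic 0 with derivation D, let k ⊆ K be a subfield with K/k a finite Galois extension with group G = Gal(K/k), suppose every σ ∈ G commutes with D, and suppose every constant of K lies in k. Let C denote the field of constants of K. Assume that every 2-cocycle of G with values in Kˣ is a coboundary, i.e., for every c : G × G → Kˣ satisfying c(σ,τ)·c(στ,ρ) = σ(c(τ,ρ))·c(σ,τρ) for all σ,τ,ρ ∈ G there exists f : G → Kˣ with c(σ,τ) = f(σ)·σ(f(τ))·f(στ)⁻¹ for all σ,τ. Define H := {u ∈ K : for every σ ∈ G there exists F ∈ Kˣ with σ(u) − u = logD F} and h := {w + logD F : w ∈ k, F ∈ Kˣ}. Then H and h are additive subgroups of K with h ⊆ H, and the quotient group H/h is isomorphic, as an abelian group, to the second group cohomology H²(G, Cˣ) of G with coefficients in the multiplicative group Cˣ of nonzero constants, with trivial G-action. -/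

import Mathlib

open groupCohomology

set_option linter.unusedSectionVars false
set_option maxHeartbeats 2000000
set_option synthInstance.maxHeartbeats 1000000

/-- The field of constants of a differential field `(K, D)`. -/
def constSubfield (K : Type) [Field K] (D : K → K)
    (hDadd : ∀ x y : K, D (x + y) = D x + D y)
    (hDmul : ∀ x y : K, D (x * y) = x * D y + D x * y) : Subfield K where
  carrier := {x : K | D x = 0}
  one_mem' := by
    have h := hDmul 1 1
    simp only [one_mul, mul_one] at h
    exact (left_eq_add.mp h)
  mul_mem' := by
    intro a b ha hb
    have h := hDmul a b
    simp only [Set.mem_setOf_eq] at *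
    rw [ha, hb] at h
    simpa using h
  zero_mem' := by
    have h := hDadd 0 0
    rw [add_zero] at h
    exact (left_eq_add.mp h)
  add_mem' := by
    intro a b ha hb
    have h := hDadd a b
    simp only [Set.mem_setOf_eq] at *
    rw [ha, hb, add_zero] at h
    exact h
  neg_mem' := by
    intro a ha
    have h := hDadd a (-a)
    simp only [Set.mem_setOf_eq] at *
    rw [add_neg_cancel, ha, zero_add] at h
    have h0 : D (0 : K) = 0 := by
      have h' := hDadd 0 0
      rw [add_zero] at h'
      exact (left_eq_add.mp h')
    rw [h0] at h
    exact h.symm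
  inv_mem' := by
    intro a ha
    simp only [Set.mem_setOf_eq] at *
    rcases eq_or_ne a 0 with rfl | h0
    · rw [inv_zero]
      have h' := hDadd 0 0
      rw [add_zero] at h'
      exact (left_eq_add.mp h')
    · have h1 : D (1 : K) = 0 := by
        have h := hDmul 1 1
        simp only [one_mul, mul_one] at h
        exact (left_eq_add.mp h)
      have h := hDmul a a⁻¹
      rw [mul_inv_cancel₀ h0, h1, ha, zero_mul, add_zero] at h
      have := h.symm
      exact (mul_eq_zero.mp this).resolve_left h0


namespace Stmt4Aux

variable {k K : Type} [Field k] [Field K] [Algebra k K]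

/-- logarithmic derivative of a unit -/
def logD (D : K → K) (F : Kˣ) : K := D (F : K) / (F : K)

variable (D : K → K)
variable (hDadd : ∀ x y : K, D (x + y) = D x + D y)
  (hDmul : ∀ x y : K, D (x * y) = x * D y + D x * y)

section basic
include hDmul

lemma D_one : D (1 : K) = 0 := by
  have h := hDmul 1 1
  simp only [one_mul, mul_one] at h
  exact (left_eq_add.mp h)

lemma D_inv (x : K) (hx : x ≠ 0) : D x⁻¹ = -(D x) / (x * x) := by
  have h := hDmul x x⁻¹
  rw [mul_inv_cancel₀ hx, D_one D hDmul] at h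
  have hyx : x⁻¹ * x = 1 := inv_mul_cancel₀ hx
  rw [eq_div_iff (mul_ne_zero hx hx)]
  linear_combination (-x) * h - (D x) * hyx

lemma logD_one : logD D 1 = 0 := by simp [logD, D_one D hDmul]

lemma logD_mul (F G' : Kˣ) : logD D (F * G') = logD D F + logD D G' := by
  have h1 : (F : K) ≠ 0 := F.ne_zero
  have h2 : (G' : K) ≠ 0 := G'.ne_zero
  unfold logD
  rw [Units.val_mul, hDmul]
  field_simp
  ring

lemma logD_inv (F : Kˣ) : logD D F⁻¹ = - logD D F := by
  have h := logD_mul D hDmul F F⁻¹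
  rw [mul_inv_cancel, logD_one D hDmul] at h
  linear_combination -h

lemma D_eq_zero_of_logD {F : Kˣ} (h : logD D F = 0) : D (F : K) = 0 := by
  unfold logD at h
  have h1 : (F : K) ≠ 0 := F.ne_zero
  field_simp at h
  simpa using h

lemma logD_eq_zero_of_D {F : Kˣ} (h : D (F : K) = 0) : logD D F = 0 := by
  unfold logD; rw [h, zero_div]

lemma D_of_logD_eq {F G' : Kˣ} (h : logD D F = logD D G') :
    D ((F * G'⁻¹ : Kˣ) : K) = 0 := by
  have h1 : (F : K) ≠ 0 := F.ne_zero
  have h2 : (G' : K) ≠ 0 := G'.ne_zero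
  unfold logD at h
  rw [div_eq_div_iff h1 h2] at h
  rw [Units.val_mul, Units.val_inv_eq_inv_val, hDmul, D_inv D hDmul _ h2]
  have key : (F : K) * (-(D (G' : K)) / ((G' : K) * (G' : K))) + D (F : K) * ((G' : K))⁻¹
      = (D (F : K) * (G' : K) - D (G' : K) * (F : K)) / ((G' : K) * (G' : K)) := by
    field_simp
    ring
  rw [key, h, sub_self, zero_div]

end basic

section galois

variable (hcomm : ∀ (σ : K ≃ₐ[k] K) (x : K), σ (D x) = D (σ x))
variable (hconst : ∀ x : K, D x = 0 → x ∈ (algebraMap k K).range)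

include hcomm in
lemma sigma_logD (σ : K ≃ₐ[k] K) (F : Kˣ) :
    σ (logD D F) = logD D (Units.map (σ : K →* K) F) := by
  simp only [logD, map_div₀, hcomm, Units.coe_map, MonoidHom.coe_coe]

include hconst in
lemma sigma_const (σ : K ≃ₐ[k] K) {x : K} (hx : D x = 0) : σ x = x := by
  obtain ⟨w, rfl⟩ := hconst x hx
  exact σ.commutes w

end galois

section constants

-- the constants subfield, defined exactly as in the main statement


def constUnit (x : Kˣ) (hx : D (x : K) = 0) : (constSubfield K D hDadd hDmul)ˣ :=
  Units.mk0 ⟨(x : K), hx⟩ (fun h => x.ne_zero (congrArg Subtype.val h))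

def ιC : (constSubfield K D hDadd hDmul)ˣ →* Kˣ :=
  Units.map (constSubfield K D hDadd hDmul).subtype.toMonoidHom

lemma iC_injective : Function.Injective (ιC D hDadd hDmul) :=
  Units.map_injective (fun _ _ h => Subtype.ext h)

@[simp] lemma iC_coe (a : (constSubfield K D hDadd hDmul)ˣ) :
    ((ιC D hDadd hDmul a : Kˣ) : K) = ((a : constSubfield K D hDadd hDmul) : K) := rfl

@[simp] lemma iC_constUnit (x : Kˣ) (hx : D (x : K) = 0) :
    ιC D hDadd hDmul (constUnit D hDadd hDmul x hx) = x := Units.ext rfl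

lemma D_iC (a : (constSubfield K D hDadd hDmul)ˣ) :
    D ((ιC D hDadd hDmul a : Kˣ) : K) = 0 := (a : constSubfield K D hDadd hDmul).2

lemma addC_ext {x y : Additive (constSubfield K D hDadd hDmul)ˣ}
    (h : ((ιC D hDadd hDmul (Additive.toMul x) : Kˣ) : K)
       = ((ιC D hDadd hDmul (Additive.toMul y) : Kˣ) : K)) : x = y := by
  have h1 : Additive.toMul x = Additive.toMul y :=
    iC_injective D hDadd hDmul (Units.ext h)
  exact Additive.toMul.injective h1

end constants

section fam

variable (hcomm : ∀ (σ : K ≃ₐ[k] K) (x : K), σ (D x) = D (σ x))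
variable (hconst : ∀ x : K, D x = 0 → x ∈ (algebraMap k K).range)

def cfam (F : (K ≃ₐ[k] K) → Kˣ) (p : (K ≃ₐ[k] K) × (K ≃ₐ[k] K)) : Kˣ :=
  F p.1 * Units.map (p.1 : K →* K) (F p.2) * (F (p.1 * p.2))⁻¹

include hDmul hcomm in
lemma logD_cfam (F : (K ≃ₐ[k] K) → Kˣ) (p : (K ≃ₐ[k] K) × (K ≃ₐ[k] K)) :
    logD D (cfam F p)
      = logD D (F p.1) + p.1 (logD D (F p.2)) - logD D (F (p.1 * p.2)) := by
  unfold cfam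
  rw [logD_mul D hDmul, logD_mul D hDmul, logD_inv D hDmul, sigma_logD D hcomm]
  ring

include hDmul hcomm in
lemma isConstFam (u : K) (F : (K ≃ₐ[k] K) → Kˣ)
    (hF : ∀ σ : K ≃ₐ[k] K, σ u - u = logD D (F σ)) (p : (K ≃ₐ[k] K) × (K ≃ₐ[k] K)) :
    D ((cfam F p : Kˣ) : K) = 0 := by
  apply D_eq_zero_of_logD D hDmul
  rw [logD_cfam D hDmul hcomm, ← hF, ← hF, ← hF]
  simp only [map_sub, AlgEquiv.mul_apply]
  ring

include hconst in
lemma cfam_cocycle (F : (K ≃ₐ[k] K) → Kˣ)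
    (hc : ∀ p, D ((cfam F p : Kˣ) : K) = 0) (g h j : K ≃ₐ[k] K) :
    cfam F (g * h, j) * cfam F (g, h) = cfam F (h, j) * cfam F (g, h * j) := by
  have hfix : (g : K ≃ₐ[k] K) ((cfam F (h, j) : Kˣ) : K) = ((cfam F (h, j) : Kˣ) : K) :=
    sigma_const D hconst g (hc (h, j))
  conv_rhs => rw [show cfam F (h, j) = Units.map ((g : K ≃ₐ[k] K) : K →* K) (cfam F (h, j))
    from Units.ext hfix.symm]
  apply Units.ext
  have n1 : ((F (g * (h * j)) : Kˣ) : K) ≠ 0 := Units.ne_zero _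
  have n2 : ((F (g * h) : Kˣ) : K) ≠ 0 := Units.ne_zero _
  have n3 : (g : K ≃ₐ[k] K) ((F (h * j) : Kˣ) : K) ≠ 0 := by
    exact (Units.map ((g : K ≃ₐ[k] K) : K →* K) (F (h * j))).ne_zero
  simp only [cfam, map_mul, map_inv, Units.val_mul, Units.val_inv_eq_inv_val,
    Units.coe_map, MonoidHom.coe_coe, AlgEquiv.mul_apply, mul_assoc, map_inv₀]
  field_simp

end fam

lemma mem_twoCoboundaries_iff {G : Type} [Group G] {A : Rep ℤ G} (f : G × G → A) :
    f ∈ groupCohomology.coboundaries₂ A ↔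
      ∃ x : G → A, ∀ g h : G, A.ρ g (x h) - x (g * h) + x g = f (g, h) := by
  constructor
  · rintro ⟨x, rfl⟩
    exact ⟨x, fun g h => rfl⟩
  · rintro ⟨x, hx⟩
    exact ⟨x, funext fun p => hx p.1 p.2⟩

section zf

variable (hcomm : ∀ (σ : K ≃ₐ[k] K) (x : K), σ (D x) = D (σ x))
variable (hconst : ∀ x : K, D x = 0 → x ∈ (algebraMap k K).range)

/-- The relevant trivial representation. -/
noncomputable abbrev Arep : Rep ℤ (K ≃ₐ[k] K) :=
  Rep.trivial ℤ (K ≃ₐ[k] K) (Additive (↥(constSubfield K D hDadd hDmul))ˣ)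

def zfam (F : (K ≃ₐ[k] K) → Kˣ) (hc : ∀ p, D ((cfam F p : Kˣ) : K) = 0) :
    ((K ≃ₐ[k] K) × (K ≃ₐ[k] K)) → Additive (↥(constSubfield K D hDadd hDmul))ˣ :=
  fun p => Additive.ofMul (constUnit D hDadd hDmul (cfam F p) (hc p))

include hconst in
lemma zfam_mem (F : (K ≃ₐ[k] K) → Kˣ) (hc : ∀ p, D ((cfam F p : Kˣ) : K) = 0) :
    zfam D hDadd hDmul F hc ∈ cocycles₂ (Arep D hDadd hDmul (k := k)) := by
  rw [mem_cocycles₂_iff]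
  intro g h j
  rw [Rep.trivial_ρ_apply]
  show zfam D hDadd hDmul F hc (g * h, j) + zfam D hDadd hDmul F hc (g, h)
      = zfam D hDadd hDmul F hc (h, j) + zfam D hDadd hDmul F hc (g, h * j)
  apply addC_ext D hDadd hDmul
  simp only [zfam, toMul_add, toMul_ofMul, map_mul, iC_constUnit, Units.val_mul]
  rw [← Units.val_mul, ← Units.val_mul, cfam_cocycle D hconst F hc g h j]

lemma cfam_mul (F1 F2 : (K ≃ₐ[k] K) → Kˣ) (p : (K ≃ₐ[k] K) × (K ≃ₐ[k] K)) :
    cfam (fun σ => F1 σ * F2 σ) p = cfam F1 p * cfam F2 p := by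
  apply Units.ext
  have n1 : ((F1 (p.1 * p.2) : Kˣ) : K) ≠ 0 := Units.ne_zero _
  have n2 : ((F2 (p.1 * p.2) : Kˣ) : K) ≠ 0 := Units.ne_zero _
  simp only [cfam, map_mul, mul_inv, Units.val_mul, Units.val_inv_eq_inv_val,
    Units.coe_map, MonoidHom.coe_coe]
  field_simp

/-- The packaged 2-cocycle. -/
noncomputable def zc (F : (K ≃ₐ[k] K) → Kˣ) (hc : ∀ p, D ((cfam F p : Kˣ) : K) = 0) :
    cocycles₂ (Arep D hDadd hDmul (k := k)) :=
  ⟨zfam D hDadd hDmul F hc, zfam_mem D hDadd hDmul hconst F hc⟩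

include hconst in
lemma zc_add (F1 F2 : (K ≃ₐ[k] K) → Kˣ) (h1 : ∀ p, D ((cfam F1 p : Kˣ) : K) = 0)
    (h2 : ∀ p, D ((cfam F2 p : Kˣ) : K) = 0)
    (h12 : ∀ p, D ((cfam (fun σ => F1 σ * F2 σ) p : Kˣ) : K) = 0) :
    zc D hDadd hDmul hconst (fun σ => F1 σ * F2 σ) h12
      = zc D hDadd hDmul hconst F1 h1 + zc D hDadd hDmul hconst F2 h2 := by
  apply Subtype.ext
  funext p
  show zfam D hDadd hDmul (fun σ => F1 σ * F2 σ) h12 p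
      = zfam D hDadd hDmul F1 h1 p + zfam D hDadd hDmul F2 h2 p
  apply addC_ext D hDadd hDmul
  simp only [zfam, toMul_add, toMul_ofMul, map_mul, iC_constUnit, Units.val_mul]
  rw [← Units.val_mul, cfam_mul]

include hconst in
lemma sub_mem_cob (F1 F2 : (K ≃ₐ[k] K) → Kˣ) (h1 : ∀ p, D ((cfam F1 p : Kˣ) : K) = 0)
    (h2 : ∀ p, D ((cfam F2 p : Kˣ) : K) = 0)
    (heq : ∀ σ : K ≃ₐ[k] K, logD D (F1 σ) = logD D (F2 σ)) :
    ⇑(zc D hDadd hDmul hconst F1 h1 - zc D hDadd hDmul hconst F2 h2)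
      ∈ coboundaries₂ (Arep D hDadd hDmul (k := k)) := by
  rw [mem_twoCoboundaries_iff]
  refine ⟨fun σ => Additive.ofMul (constUnit D hDadd hDmul (F1 σ * (F2 σ)⁻¹)
    (D_of_logD_eq D hDmul (heq σ))), ?_⟩
  intro g h
  show Additive.ofMul (constUnit D hDadd hDmul (F1 h * (F2 h)⁻¹) _)
      - Additive.ofMul (constUnit D hDadd hDmul (F1 (g * h) * (F2 (g * h))⁻¹) _)
      + Additive.ofMul (constUnit D hDadd hDmul (F1 g * (F2 g)⁻¹) _)
      = zfam D hDadd hDmul F1 h1 (g, h) - zfam D hDadd hDmul F2 h2 (g, h)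
  apply addC_ext D hDadd hDmul
  have hfix : (g : K ≃ₐ[k] K) ((F1 h * (F2 h)⁻¹ : Kˣ) : K) = ((F1 h * (F2 h)⁻¹ : Kˣ) : K) :=
    sigma_const D hconst g (D_of_logD_eq D hDmul (heq h))
  rw [Units.val_mul, Units.val_inv_eq_inv_val, map_mul, map_inv₀] at hfix
  have nf2h : ((F2 h : Kˣ) : K) ≠ 0 := Units.ne_zero _
  have ngf2h : (g : K ≃ₐ[k] K) ((F2 h : Kˣ) : K) ≠ 0 := by
    exact (Units.map ((g : K ≃ₐ[k] K) : K →* K) (F2 h)).ne_zero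
  have hrepl : (g : K ≃ₐ[k] K) ((F1 h : Kˣ) : K)
      = ((F1 h : Kˣ) : K) * (g : K ≃ₐ[k] K) ((F2 h : Kˣ) : K) / ((F2 h : Kˣ) : K) := by
    rw [eq_div_iff nf2h]
    field_simp at hfix
    linear_combination hfix
  simp only [zfam, toMul_add, toMul_sub, toMul_ofMul, map_mul, map_sub, map_div, iC_constUnit,
    Units.val_mul, Units.val_div_eq_div_val, Units.val_inv_eq_inv_val]
  simp only [cfam, Units.val_mul, Units.val_inv_eq_inv_val, Units.coe_map, MonoidHom.coe_coe]
  rw [hrepl]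
  have n3 : ((F1 (g * h) : Kˣ) : K) ≠ 0 := Units.ne_zero _
  have n4 : ((F2 (g * h) : Kˣ) : K) ≠ 0 := Units.ne_zero _
  have n5 : ((F1 g : Kˣ) : K) ≠ 0 := Units.ne_zero _
  have n6 : ((F2 g : Kˣ) : K) ≠ 0 := Units.ne_zero _
  have n7 : ((F1 h : Kˣ) : K) ≠ 0 := Units.ne_zero _
  field_simp

include hconst in
lemma zc_coboundary_family (b : Kˣ)
    (hcb : ∀ p, D ((cfam (fun σ : K ≃ₐ[k] K => Units.map (σ : K →* K) b * b⁻¹) p : Kˣ) : K) = 0) :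
    zc D hDadd hDmul hconst (fun σ : K ≃ₐ[k] K => Units.map (σ : K →* K) b * b⁻¹) hcb = 0 := by
  apply Subtype.ext
  funext p
  show zfam D hDadd hDmul _ hcb p = (0 : Additive (↥(constSubfield K D hDadd hDmul))ˣ)
  apply addC_ext D hDadd hDmul
  simp only [zfam, toMul_ofMul, toMul_zero, map_one, iC_constUnit, Units.val_one]
  have nb : ((b : Kˣ) : K) ≠ 0 := Units.ne_zero _
  have n1 : (p.1 : K ≃ₐ[k] K) ((b : Kˣ) : K) ≠ 0 := by
    exact (Units.map ((p.1 : K ≃ₐ[k] K) : K →* K) b).ne_zero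
  have n2 : (p.1 : K ≃ₐ[k] K) ((p.2 : K ≃ₐ[k] K) ((b : Kˣ) : K)) ≠ 0 := by
    exact (Units.map ((p.1 : K ≃ₐ[k] K) : K →* K) (Units.map ((p.2 : K ≃ₐ[k] K) : K →* K) b)).ne_zero
  simp only [cfam, map_mul, map_inv, mul_inv, Units.val_mul, Units.val_inv_eq_inv_val,
    Units.coe_map, MonoidHom.coe_coe, AlgEquiv.mul_apply, map_inv₀, inv_inv]
  field_simp

end zf

section h90

lemma mem_range_of_fixed [FiniteDimensional k K] [IsGalois k K] (v : K)
    (hv : ∀ σ : K ≃ₐ[k] K, σ v = v) : v ∈ (algebraMap k K).range := by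
  have hbot : IntermediateField.fixedField (⊤ : Subgroup (K ≃ₐ[k] K)) = ⊥ := by
    have htf := IsGalois.tfae (F := k) (E := K)
    have h2 := htf.out 0 1
    exact h2.mp inferInstance
  have hv' : v ∈ IntermediateField.fixedField (⊤ : Subgroup (K ≃ₐ[k] K)) := by
    intro g
    exact hv g.1
  rw [hbot, IntermediateField.mem_bot] at hv'
  obtain ⟨w, hw⟩ := hv'
  exact ⟨w, hw⟩

lemma add_hilbert90 [CharZero K] [FiniteDimensional k K] [IsGalois k K]
    (gfun : (K ≃ₐ[k] K) → K)
    (hrel : ∀ σ τ : K ≃ₐ[k] K, gfun (σ * τ) = gfun σ + σ (gfun τ)) :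
    ∃ u : K, ∀ σ : K ≃ₐ[k] K, σ u - u = gfun σ := by
  classical
  letI : Fintype (K ≃ₐ[k] K) := AlgEquiv.fintype k K
  set n := Fintype.card (K ≃ₐ[k] K) with hn
  have hn0 : (n : K) ≠ 0 := Nat.cast_ne_zero.mpr Fintype.card_ne_zero
  set a : K := (n : K)⁻¹ with hadef
  have ha : ∀ σ : K ≃ₐ[k] K, σ a = a := fun σ => by
    rw [hadef, map_inv₀, map_natCast]
  refine ⟨-∑ τ : K ≃ₐ[k] K, gfun τ * τ a, fun σ => ?_⟩
  rw [map_neg, map_sum]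
  have step1 : ∀ τ : K ≃ₐ[k] K, σ (gfun τ * τ a)
      = gfun (σ * τ) * ((σ * τ) a) - gfun σ * ((σ * τ) a) := by
    intro τ
    rw [map_mul]
    have h1 : σ (gfun τ) = gfun (σ * τ) - gfun σ := by
      linear_combination -(hrel σ τ)
    rw [h1, AlgEquiv.mul_apply]
    ring
  rw [Finset.sum_congr rfl (fun τ _ => step1 τ)]
  rw [Finset.sum_sub_distrib]
  have reindex : ∑ τ : K ≃ₐ[k] K, gfun (σ * τ) * ((σ * τ) a)
      = ∑ ρ : K ≃ₐ[k] K, gfun ρ * (ρ a) := by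
    exact Fintype.sum_equiv (Equiv.mulLeft σ) _ _ (fun τ => rfl)
  have hsum1 : ∑ τ : K ≃ₐ[k] K, gfun σ * ((σ * τ) a) = gfun σ := by
    rw [← Finset.mul_sum]
    have : ∑ τ : K ≃ₐ[k] K, ((σ * τ) a) = ∑ ρ : K ≃ₐ[k] K, ρ a :=
      Fintype.sum_equiv (Equiv.mulLeft σ) _ _ (fun τ => rfl)
    rw [this]
    have : ∑ ρ : K ≃ₐ[k] K, ρ a = (n : K) * a := by
      rw [Finset.sum_congr rfl (fun ρ _ => ha ρ), Finset.sum_const, Finset.card_univ,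
        nsmul_eq_mul]
    rw [this, hadef, mul_inv_cancel₀ hn0, mul_one]
  rw [reindex, hsum1]
  ring

end h90

section main

variable (hcomm : ∀ (σ : K ≃ₐ[k] K) (x : K), σ (D x) = D (σ x))
variable (hconst : ∀ x : K, D x = 0 → x ∈ (algebraMap k K).range)

include hconst in
lemma zc_mem_cob_of_h [FiniteDimensional k K] (hcomm' : ∀ (σ : K ≃ₐ[k] K) (x : K), σ (D x) = D (σ x))
    (u : K) (w : k) (b : Kˣ) (hu : u = algebraMap k K w + logD D b)
    (F : (K ≃ₐ[k] K) → Kˣ) (hF : ∀ σ : K ≃ₐ[k] K, σ u - u = logD D (F σ))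
    (hc : ∀ p, D ((cfam F p : Kˣ) : K) = 0) :
    ⇑(zc D hDadd hDmul hconst F hc) ∈ coboundaries₂ (Arep D hDadd hDmul (k := k)) := by
  set Fb : (K ≃ₐ[k] K) → Kˣ := fun σ => Units.map (σ : K →* K) b * b⁻¹ with hFbdef
  have hFb : ∀ σ : K ≃ₐ[k] K, σ u - u = logD D (Fb σ) := by
    intro σ
    rw [hu, map_add, σ.commutes, hFbdef]
    rw [logD_mul D hDmul, logD_inv D hDmul, ← sigma_logD D hcomm']
    ring
  have hcb : ∀ p, D ((cfam Fb p : Kˣ) : K) = 0 :=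
    isConstFam D hDmul hcomm' u Fb hFb
  have h0 : zc D hDadd hDmul hconst Fb hcb = 0 :=
    zc_coboundary_family D hDadd hDmul hconst b hcb
  have hsub := sub_mem_cob D hDadd hDmul hconst F Fb hc hcb
    (fun σ => by rw [← hF σ, ← hFb σ])
  rw [h0] at hsub
  exact (sub_zero (zc D hDadd hDmul hconst F hc)) ▸ hsub

include hconst in
lemma mem_h_of_cob [CharZero K] [FiniteDimensional k K] [IsGalois k K]
    (hcomm' : ∀ (σ : K ≃ₐ[k] K) (x : K), σ (D x) = D (σ x))
    (u : K) (F : (K ≃ₐ[k] K) → Kˣ) (hF : ∀ σ : K ≃ₐ[k] K, σ u - u = logD D (F σ))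
    (hc : ∀ p, D ((cfam F p : Kˣ) : K) = 0)
    (hcob : ⇑(zc D hDadd hDmul hconst F hc) ∈ coboundaries₂ (Arep D hDadd hDmul (k := k))) :
    ∃ (w : k) (b : Kˣ), u = algebraMap k K w + logD D b := by
  rw [mem_twoCoboundaries_iff] at hcob
  obtain ⟨x, hx⟩ := hcob
  set y : (K ≃ₐ[k] K) → Additive (↥(constSubfield K D hDadd hDmul))ˣ :=
    fun σ => x σ with hy
  have hx2 : ∀ g h : K ≃ₐ[k] K,
      y h - y (g * h) + y g = zfam D hDadd hDmul F hc (g, h) := by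
    intro g h
    have e := hx g h
    rw [Rep.trivial_ρ_apply] at e
    exact e
  set d : (K ≃ₐ[k] K) → Kˣ := fun σ => ιC D hDadd hDmul (Additive.toMul (y σ)) with hddef
  have hdconst : ∀ σ : K ≃ₐ[k] K, D ((d σ : Kˣ) : K) = 0 :=
    fun σ => D_iC D hDadd hDmul _
  have hdfix : ∀ (g σ : K ≃ₐ[k] K), g ((d σ : Kˣ) : K) = ((d σ : Kˣ) : K) :=
    fun g σ => sigma_const D hconst g (hdconst σ)
  have hxK : ∀ g h : K ≃ₐ[k] K,
      ((d h : Kˣ) : K) / ((d (g * h) : Kˣ) : K) * ((d g : Kˣ) : K)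
        = ((cfam F (g, h) : Kˣ) : K) := by
    intro g h
    have e2 := congrArg
      (fun t : Additive (↥(constSubfield K D hDadd hDmul))ˣ =>
        ((ιC D hDadd hDmul (Additive.toMul t) : Kˣ) : K)) (hx2 g h)
    simp only [toMul_add, toMul_sub, map_mul, map_div, Units.val_mul,
      Units.val_div_eq_div_val, zfam, toMul_ofMul, iC_constUnit] at e2
    exact e2
  set F' : (K ≃ₐ[k] K) → Kˣ := fun σ => F σ * (d σ)⁻¹ with hF'def
  have hmc : IsMulCocycle₁ F' := by
    intro g h
    rw [AlgEquiv.smul_units_def]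
    apply Units.ext
    have hK := hxK g h
    simp only [cfam, Units.val_mul, Units.val_inv_eq_inv_val, Units.coe_map,
      MonoidHom.coe_coe] at hK
    have n1 : ((d (g * h) : Kˣ) : K) ≠ 0 := Units.ne_zero _
    have n2 : ((d g : Kˣ) : K) ≠ 0 := Units.ne_zero _
    have n3 : ((d h : Kˣ) : K) ≠ 0 := Units.ne_zero _
    have n4 : ((F (g * h) : Kˣ) : K) ≠ 0 := Units.ne_zero _
    simp only [hF'def, Units.val_mul, Units.val_inv_eq_inv_val, Units.coe_map,
      MonoidHom.coe_coe, map_mul, map_inv₀, hdfix g h]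
    field_simp
    field_simp at hK
    linear_combination hK
  obtain ⟨β, hβ⟩ := isMulCoboundary₁_of_isMulCocycle₁_of_aut_to_units F' hmc
  have hlog : ∀ σ : K ≃ₐ[k] K, σ u - u = σ (logD D β) - logD D β := by
    intro σ
    have h2 : logD D (F σ) = logD D (F' σ) := by
      have hFs : F σ = F' σ * d σ := by
        rw [hF'def]
        simp [mul_assoc]
      rw [hFs, logD_mul D hDmul, logD_eq_zero_of_D D hDmul (hdconst σ), add_zero]
    have h3 : F' σ = Units.map (σ : K →* K) β * β⁻¹ := by
      have hb := hβ σ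
      rw [AlgEquiv.smul_units_def, div_eq_mul_inv] at hb
      exact hb.symm
    rw [hF σ, h2, h3, logD_mul D hDmul, logD_inv D hDmul, sigma_logD D hcomm']
    ring
  have hfix : ∀ σ : K ≃ₐ[k] K, σ (u - logD D β) = u - logD D β := by
    intro σ
    rw [map_sub]
    linear_combination hlog σ
  obtain ⟨w, hw⟩ := mem_range_of_fixed (u - logD D β) hfix
  refine ⟨w, β, ?_⟩
  rw [hw]
  ring

include hconst in
lemma surj_aux [CharZero K] [FiniteDimensional k K] [IsGalois k K]
    (hcomm' : ∀ (σ : K ≃ₐ[k] K) (x : K), σ (D x) = D (σ x))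
    (hH2Ktriv : ∀ c : (K ≃ₐ[k] K) → (K ≃ₐ[k] K) → Kˣ,
      (∀ σ τ ρ : K ≃ₐ[k] K,
          (c σ τ : K) * (c (σ * τ) ρ : K) = σ (c τ ρ : K) * (c σ (τ * ρ) : K)) →
      ∃ f : (K ≃ₐ[k] K) → Kˣ,
        ∀ σ τ : K ≃ₐ[k] K, (c σ τ : K) = (f σ : K) * σ (f τ : K) * ((f (σ * τ) : K))⁻¹)
    (z : cocycles₂ (Arep D hDadd hDmul (k := k))) :
    ∃ (u : K) (F : (K ≃ₐ[k] K) → Kˣ) (hF : ∀ σ : K ≃ₐ[k] K, σ u - u = logD D (F σ))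
      (hc : ∀ p, D ((cfam F p : Kˣ) : K) = 0),
      zc D hDadd hDmul hconst F hc = z := by
  set w : ((K ≃ₐ[k] K) × (K ≃ₐ[k] K)) → Additive (↥(constSubfield K D hDadd hDmul))ˣ :=
    fun p => z.1 p with hw
  set c : (K ≃ₐ[k] K) → (K ≃ₐ[k] K) → Kˣ :=
    fun σ τ => ιC D hDadd hDmul (Additive.toMul (w (σ, τ))) with hcdef
  have hcD : ∀ σ τ : K ≃ₐ[k] K, D ((c σ τ : Kˣ) : K) = 0 :=
    fun σ τ => D_iC D hDadd hDmul _
  have hccond : ∀ σ τ ρ : K ≃ₐ[k] K,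
      (c σ τ : K) * (c (σ * τ) ρ : K) = σ (c τ ρ : K) * (c σ (τ * ρ) : K) := by
    intro σ τ ρ
    have e' : w (σ * τ, ρ) + w (σ, τ) = w (τ, ρ) + w (σ, τ * ρ) := by
      have e := (mem_cocycles₂_iff (A := Arep D hDadd hDmul (k := k)) z.1).mp z.2 σ τ ρ
      rw [Rep.trivial_ρ_apply] at e
      exact e
    have e2 := congrArg
      (fun t : Additive (↥(constSubfield K D hDadd hDmul))ˣ =>
        ((ιC D hDadd hDmul (Additive.toMul t) : Kˣ) : K)) e'
    simp only [toMul_add, map_mul, Units.val_mul] at e2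
    rw [sigma_const D hconst σ (hcD τ ρ)]
    rw [hcdef]
    linear_combination e2
  obtain ⟨f, hf⟩ := hH2Ktriv c hccond
  have hcf : ∀ p, D ((cfam f p : Kˣ) : K) = 0 := by
    intro p
    have hval : ((cfam f p : Kˣ) : K) = ((c p.1 p.2 : Kˣ) : K) := by
      rw [hf p.1 p.2]
      simp only [cfam, Units.val_mul, Units.val_inv_eq_inv_val, Units.coe_map,
        MonoidHom.coe_coe]
    rw [hval]
    exact hcD p.1 p.2
  have hrel : ∀ σ τ : K ≃ₐ[k] K,
      logD D (f (σ * τ)) = logD D (f σ) + σ (logD D (f τ)) := by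
    intro σ τ
    have h0 : logD D (cfam f (σ, τ)) = 0 :=
      logD_eq_zero_of_D D hDmul (hcf (σ, τ))
    rw [logD_cfam D hDmul hcomm'] at h0
    linear_combination -h0
  obtain ⟨u, hu⟩ := add_hilbert90 (fun σ => logD D (f σ)) hrel
  refine ⟨u, f, hu, hcf, ?_⟩
  apply Subtype.ext
  funext p
  show zfam D hDadd hDmul f hcf p = z.1 p
  apply addC_ext D hDadd hDmul
  simp only [zfam, toMul_ofMul, iC_constUnit]
  show ((cfam f p : Kˣ) : K) = ((c p.1 p.2 : Kˣ) : K)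
  rw [hf p.1 p.2]
  simp only [cfam, Units.val_mul, Units.val_inv_eq_inv_val, Units.coe_map, MonoidHom.coe_coe]

end main

end Stmt4Aux

open Stmt4Aux in
/-- paper's Lemma 4.1.  Let `K/k` be a finite Galois extension of
differential fields (the Galois group commuting with the derivation `D`, the field of
constants `C` of `K` contained in `k`, `char K = 0`).  Assume every 2-cocycle of
`G = Gal(K/k)` with values in `Kˣ` is a coboundary.  Let
`H := {u ∈ K : ∀ σ ∈ G, ∃ F ∈ Kˣ, σ(u) − u = logD F}` and
`h := {w + logD F : w ∈ k, F ∈ Kˣ}`.  Then `H` and `h` are additive subgroups of `K`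
with `h ⊆ H`, and `H/h ≅ H²(G, Cˣ)` as abelian groups (trivial `G`-action on `Cˣ`). -/
theorem stmt4 (k K : Type) [Field k] [Field K] [Algebra k K] [CharZero K]
    [FiniteDimensional k K] [IsGalois k K]
    (D : K → K)
    (hDadd : ∀ x y : K, D (x + y) = D x + D y)
    (hDmul : ∀ x y : K, D (x * y) = x * D y + D x * y)
    (hcomm : ∀ (σ : K ≃ₐ[k] K) (x : K), σ (D x) = D (σ x))
    (hconst : ∀ x : K, D x = 0 → x ∈ (algebraMap k K).range)
    (hH2Ktriv : ∀ c : (K ≃ₐ[k] K) → (K ≃ₐ[k] K) → Kˣ,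
      (∀ σ τ ρ : K ≃ₐ[k] K,
          (c σ τ : K) * (c (σ * τ) ρ : K) = σ (c τ ρ : K) * (c σ (τ * ρ) : K)) →
      ∃ f : (K ≃ₐ[k] K) → Kˣ,
        ∀ σ τ : K ≃ₐ[k] K, (c σ τ : K) = (f σ : K) * σ (f τ : K) * ((f (σ * τ) : K))⁻¹) :
    ∃ (H h : AddSubgroup K),
      (H : Set K) = {u : K | ∀ σ : K ≃ₐ[k] K, ∃ F : Kˣ, σ u - u = D (F : K) / (F : K)} ∧
      (h : Set K) = {u : K | ∃ (w : k) (F : Kˣ), u = algebraMap k K w + D (F : K) / (F : K)} ∧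
      h ≤ H ∧
      Nonempty ((H ⧸ h.addSubgroupOf H) ≃+
        groupCohomology.H2 (Rep.trivial ℤ (K ≃ₐ[k] K)
          (Additive (↥(constSubfield K D hDadd hDmul))ˣ))) := by
  classical
  let HS : AddSubgroup K :=
    { carrier := {u : K | ∀ σ : K ≃ₐ[k] K, ∃ F : Kˣ, σ u - u = D (F : K) / (F : K)}
      zero_mem' := by
        intro σ
        exact ⟨1, by simp [D_one D hDmul]⟩
      add_mem' := by
        intro a b ha hb σ
        obtain ⟨F1, h1⟩ := ha σ
        obtain ⟨F2, h2⟩ := hb σ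
        refine ⟨F1 * F2, ?_⟩
        show σ (a + b) - (a + b) = logD D (F1 * F2)
        rw [logD_mul D hDmul, map_add]
        have h1' : σ a - a = logD D F1 := h1
        have h2' : σ b - b = logD D F2 := h2
        linear_combination h1' + h2'
      neg_mem' := by
        intro a ha σ
        obtain ⟨F1, h1⟩ := ha σ
        refine ⟨F1⁻¹, ?_⟩
        show σ (-a) - (-a) = logD D F1⁻¹
        rw [logD_inv D hDmul, map_neg]
        have h1' : σ a - a = logD D F1 := h1
        linear_combination -h1' }
  let hS : AddSubgroup K :=
    { carrier := {u : K | ∃ (w : k) (F : Kˣ), u = algebraMap k K w + D (F : K) / (F : K)}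
      zero_mem' := ⟨0, 1, by simp [D_one D hDmul]⟩
      add_mem' := by
        rintro a b ⟨w1, F1, ha⟩ ⟨w2, F2, hb⟩
        refine ⟨w1 + w2, F1 * F2, ?_⟩
        show a + b = algebraMap k K (w1 + w2) + logD D (F1 * F2)
        rw [map_add, logD_mul D hDmul]
        have ha' : a = algebraMap k K w1 + logD D F1 := ha
        have hb' : b = algebraMap k K w2 + logD D F2 := hb
        linear_combination ha' + hb'
      neg_mem' := by
        rintro a ⟨w1, F1, ha⟩
        refine ⟨-w1, F1⁻¹, ?_⟩
        show -a = algebraMap k K (-w1) + logD D F1⁻¹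
        rw [map_neg, logD_inv D hDmul]
        have ha' : a = algebraMap k K w1 + logD D F1 := ha
        linear_combination -ha' }
  have hmemH : ∀ u : K, u ∈ HS ↔
      (∀ σ : K ≃ₐ[k] K, ∃ F : Kˣ, σ u - u = D (F : K) / (F : K)) := fun _ => Iff.rfl
  have hmemh : ∀ u : K, u ∈ hS ↔
      (∃ (w : k) (F : Kˣ), u = algebraMap k K w + D (F : K) / (F : K)) := fun _ => Iff.rfl
  have hle : hS ≤ HS := by
    intro u hu
    obtain ⟨w, b, hub⟩ := (hmemh u).mp hu
    refine (hmemH u).mpr (fun σ => ⟨Units.map (σ : K →* K) b * b⁻¹, ?_⟩)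
    show σ u - u = logD D (Units.map (σ : K →* K) b * b⁻¹)
    rw [logD_mul D hDmul, logD_inv D hDmul, ← sigma_logD D hcomm]
    have hub' : u = algebraMap k K w + logD D b := hub
    rw [hub', map_add, σ.commutes]
    ring
  -- choices
  let Fc : ↥HS → (K ≃ₐ[k] K) → Kˣ := fun x σ => (((hmemH x.1).mp x.2) σ).choose
  have Fc_spec : ∀ (x : ↥HS) (σ : K ≃ₐ[k] K), σ (x : K) - (x : K) = logD D (Fc x σ) :=
    fun x σ => (((hmemH x.1).mp x.2) σ).choose_spec
  have hcF : ∀ (x : ↥HS) p, D ((cfam (Fc x) p : Kˣ) : K) = 0 :=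
    fun x => isConstFam D hDmul hcomm x.1 (Fc x) (Fc_spec x)
  let zx : ↥HS → cocycles₂ (Arep D hDadd hDmul (k := k)) :=
    fun x => zc D hDadd hDmul hconst (Fc x) (hcF x)
  let φf : ↥HS → groupCohomology.H2 (Arep D hDadd hDmul (k := k)) :=
    fun x => H2π _ (zx x)
  have φadd : ∀ x y : ↥HS, φf (x + y) = φf x + φf y := by
    intro x y
    show H2π _ (zx (x + y))
        = H2π _ (zx x) + H2π _ (zx y)
    have h12 : ∀ p, D ((cfam (fun σ => Fc x σ * Fc y σ) p : Kˣ) : K) = 0 := by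
      apply isConstFam D hDmul hcomm ((x : K) + (y : K))
      intro σ
      rw [logD_mul D hDmul, map_add]
      linear_combination Fc_spec x σ + Fc_spec y σ
    have hzz : zx x + zx y = zc D hDadd hDmul hconst (fun σ => Fc x σ * Fc y σ) h12 :=
      (zc_add D hDadd hDmul hconst _ _ (hcF x) (hcF y) h12).symm
    rw [← map_add, hzz, H2π_eq_iff]
    apply sub_mem_cob D hDadd hDmul hconst
    intro σ
    rw [logD_mul D hDmul]
    have e := Fc_spec (x + y) σ
    rw [show ((x + y : ↥HS) : K) = (x : K) + (y : K) from rfl, map_add] at e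
    linear_combination -e + Fc_spec x σ + Fc_spec y σ
  let φ : ↥HS →+ groupCohomology.H2 (Arep D hDadd hDmul (k := k)) :=
    AddMonoidHom.mk' φf φadd
  have hker : φ.ker = hS.addSubgroupOf HS := by
    ext x
    simp only [AddMonoidHom.mem_ker, AddSubgroup.mem_addSubgroupOf]
    constructor
    · intro h0
      change H2π _ (zx x) = 0 at h0
      have hcb : ⇑(zx x) ∈ coboundaries₂ (Arep D hDadd hDmul (k := k)) :=
        (H2π_eq_zero_iff _).mp h0
      obtain ⟨w, b, hub⟩ := mem_h_of_cob D hDadd hDmul hconst hcomm x.1 (Fc x)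
        (Fc_spec x) (hcF x) hcb
      exact (hmemh x.1).mpr ⟨w, b, hub⟩
    · intro hmem
      obtain ⟨w, b, hub⟩ := (hmemh x.1).mp hmem
      change H2π _ (zx x) = 0
      apply (H2π_eq_zero_iff _).mpr
      exact zc_mem_cob_of_h D hDadd hDmul hconst hcomm x.1 w b hub (Fc x)
        (Fc_spec x) (hcF x)
  have hsurj : Function.Surjective φ := by
    intro ycl
    obtain ⟨z, rfl⟩ := (ModuleCat.epi_iff_surjective (H2π (Arep D hDadd hDmul (k := k)))).1 inferInstance ycl
    obtain ⟨u, f, hFu, hcf, hz⟩ := surj_aux D hDadd hDmul hconst hcomm hH2Ktriv z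
    have hu : u ∈ HS := (hmemH u).mpr (fun σ => ⟨f σ, hFu σ⟩)
    refine ⟨⟨u, hu⟩, ?_⟩
    change H2π _ (zx ⟨u, hu⟩) = H2π _ z
    rw [H2π_eq_iff]
    have hsc := sub_mem_cob D hDadd hDmul hconst (Fc ⟨u, hu⟩) f (hcF _) hcf ?_
    · rw [hz] at hsc
      exact hsc
    · intro σ
      have e := Fc_spec ⟨u, hu⟩ σ
      rw [show ((⟨u, hu⟩ : ↥HS) : K) = u from rfl] at e
      linear_combination -e + hFu σ
  refine ⟨HS, hS, rfl, rfl, hle, ?_⟩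
  exact ⟨(QuotientAddGroup.quotientAddEquivOfEq hker.symm).symm.symm.trans
    (QuotientAddGroup.quotientKerEquivOfSurjective φ hsurj)⟩
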